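/- Let X be a compact topological space and A ⊆ C(X, ℂ) an L(1)-set, i.e., A is convex, closed under multiplication by scalars α with |α| ≤ 1 and under taking pointwise absolute value, A separates points of X, A contains all constant functions, and whenever f ∉ A there exist x, y ∈ X and ε > 0 such that every g ∈ C(X) with |f(x)−g(x)| < ε and |f(y)−g(y)| < ε also satisfies g ∉ A. Define d(x,y) = sup_{f ∈ A} |f(x)−f(y)|. Then (X, d) is a topometric space (d is a lower semi-continuous metric refining the topology) and A equals exactly the set of continuous 1-Lipschitz functions X → ℂ with respect to d; moreover d is the unique such metric. -/

import Mathlib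

open scoped ENNReal NNReal
open Set

structure TopometricOn (X : Type*) [TopologicalSpace X] where
  d : X → X → ℝ≥0∞
  d_self : ∀ x, d x x = 0
  eq_of_d_eq_zero : ∀ x y, d x y = 0 → x = y
  d_symm : ∀ x y, d x y = d y x
  d_triangle : ∀ x y z, d x z ≤ d x y + d y z
  lsc : LowerSemicontinuous fun p : X × X => d p.1 p.2
  refines : ∀ U : Set X, IsOpen U → ∀ x ∈ U, ∃ ε > (0 : ℝ≥0∞), ∀ y, d x y < ε → y ∈ U

namespace TopometricOn

variable {X : Type*} [TopologicalSpace X]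

noncomputable def setD (T : TopometricOn X) (F G : Set X) : ℝ≥0∞ :=
  ⨅ x ∈ F, ⨅ y ∈ G, T.d x y

noncomputable def ptD (T : TopometricOn X) (x : X) (F : Set X) : ℝ≥0∞ :=
  ⨅ y ∈ F, T.d x y

def IsNormal (T : TopometricOn X) : Prop :=
  (∀ F G : Set X, IsClosed F → IsClosed G → 0 < T.setD F G →
      ∃ U V : Set X, IsOpen U ∧ IsOpen V ∧ F ⊆ U ∧ G ⊆ V ∧ Disjoint U V) ∧
  (∀ F : Set X, IsClosed F → ∀ r : ℝ≥0∞, 0 < r → IsClosed {x | T.ptD x F ≤ r})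


end TopometricOn

namespace L1Aux

open TopometricOn

variable {X : Type*} [TopologicalSpace X]

lemma lsc_left (T : TopometricOn X) (y₀ : X) : LowerSemicontinuous fun z => T.d z y₀ :=
  T.lsc.comp (continuous_id.prodMk continuous_const)

lemma ptD_le (T : TopometricOn X) {K : Set X} {z p : X} (hp : p ∈ K) :
    T.ptD z K ≤ T.d z p := iInf₂_le p hp

lemma le_ptD (T : TopometricOn X) {K : Set X} {z : X} {c : ℝ≥0∞}
    (h : ∀ p ∈ K, c ≤ T.d z p) : c ≤ T.ptD z K := le_iInf₂ h

lemma exists_of_ptD_lt (T : TopometricOn X) {K : Set X} {z : X} {c : ℝ≥0∞}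
    (h : T.ptD z K < c) : ∃ p ∈ K, T.d z p < c := by
  simpa [TopometricOn.ptD, iInf_lt_iff] using h

lemma ptD_lsc (T : TopometricOn X) {K : Set X} (hK : IsCompact K) :
    LowerSemicontinuous fun z => T.ptD z K := by
  intro z c hc
  rcases exists_between hc with ⟨c', hcc', hc'⟩
  have hO : IsOpen {p : X × X | c' < T.d p.1 p.2} := by
    have h1 := T.lsc
    rw [lowerSemicontinuous_iff_isOpen_preimage] at h1
    exact h1 c'
  have key : ∀ y ∈ K, ∃ U V : Set X, IsOpen U ∧ IsOpen V ∧ z ∈ U ∧ y ∈ V ∧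
      ∀ a ∈ U, ∀ b ∈ V, c' < T.d a b := by
    intro y hyK
    have hzy : (z, y) ∈ {p : X × X | c' < T.d p.1 p.2} :=
      hc'.trans_le (ptD_le T hyK)
    rcases isOpen_prod_iff.1 hO z y hzy with ⟨U, V, hU, hV, hz, hy', hsub⟩
    exact ⟨U, V, hU, hV, hz, hy', fun a ha b hb => hsub (mk_mem_prod ha hb)⟩
  choose! U V hU hV hzU hyV hd using key
  rcases hK.elim_finite_subcover_image (fun y hy => hV y hy) (fun y hy => mem_biUnion hy (hyV y hy))
    with ⟨b', hb'K, hb'fin, hcov⟩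
  have hNopen : IsOpen (⋂ y ∈ b', U y) := hb'fin.isOpen_biInter (fun y hy => hU y (hb'K hy))
  have hzN : z ∈ ⋂ y ∈ b', U y := mem_biInter (fun y hy => hzU y (hb'K hy))
  filter_upwards [hNopen.mem_nhds hzN] with w hw
  refine hcc'.trans_le (le_ptD T fun p hp => ?_)
  rcases mem_iUnion₂.1 (hcov hp) with ⟨y, hyb', hpV⟩
  exact (hd y (hb'K hyb') w ((by exact (Set.mem_iInter₂.mp hw y hyb') : w ∈ U y)) p hpV).le

lemma isClosed_thick (T : TopometricOn X) [CompactSpace X] {K : Set X} (hK : IsClosed K)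
    (c : ℝ≥0∞) : IsClosed {z | T.ptD z K ≤ c} := by
  have h1 := ptD_lsc T hK.isCompact
  rw [lowerSemicontinuous_iff_isOpen_preimage] at h1
  have h2 := h1 c
  have : {z | T.ptD z K ≤ c} = ((fun z => T.ptD z K) ⁻¹' Ioi c)ᶜ := by
    ext z; simp [not_lt]
  rw [this]
  exact h2.isClosed_compl

lemma isOpen_ptD_gt (T : TopometricOn X) [CompactSpace X] {K : Set X} (hK : IsClosed K)
    (c : ℝ≥0∞) : IsOpen {z | c < T.ptD z K} := by
  have h1 := ptD_lsc T hK.isCompact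
  rw [lowerSemicontinuous_iff_isOpen_preimage] at h1
  exact h1 c

end L1Aux

namespace L1Urysohn

open TopometricOn L1Aux

variable {X : Type*} [TopologicalSpace X]

noncomputable def eQ : ℕ → ℚ := (exists_surjective_nat ℚ).choose

lemma eQ_surj (ζ : ℚ) : ∃ n, eQ n = ζ := (exists_surjective_nat ℚ).choose_spec ζ

noncomputable def qq : ℕ → ℝ
  | 0 => 0
  | 1 => 1
  | (n+2) => if 0 < ((eQ n : ℚ) : ℝ) ∧ ((eQ n : ℚ) : ℝ) < 1 then ((eQ n : ℚ) : ℝ) else 1/2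

@[simp] lemma qq_zero : qq 0 = 0 := rfl
@[simp] lemma qq_one : qq 1 = 1 := rfl
lemma qq_two (n : ℕ) :
    qq (n+2) = if 0 < ((eQ n : ℚ) : ℝ) ∧ ((eQ n : ℚ) : ℝ) < 1 then ((eQ n : ℚ) : ℝ) else 1/2 :=
  rfl

lemma qq_nonneg : ∀ n, 0 ≤ qq n
  | 0 => le_refl _
  | 1 => zero_le_one
  | (n+2) => by rw [qq_two]; split_ifs with h; exacts [h.1.le, by norm_num]

lemma qq_le_one : ∀ n, qq n ≤ 1
  | 0 => zero_le_one
  | 1 => le_refl _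
  | (n+2) => by rw [qq_two]; split_ifs with h; exacts [h.2.le, by norm_num]

lemma qq_lt_one : ∀ {n : ℕ}, n ≠ 1 → qq n < 1
  | 0, _ => by norm_num
  | 1, h => absurd rfl h
  | (k+2), _ => by rw [qq_two]; split_ifs with h; exacts [h.2, by norm_num]

lemma qq_pos : ∀ {n : ℕ}, n ≠ 0 → 0 < qq n
  | 0, h => absurd rfl h
  | 1, _ => by norm_num
  | (k+2), _ => by rw [qq_two]; split_ifs with h; exacts [h.1, by norm_num]

lemma qq_dense {a b : ℝ} (ha : 0 ≤ a) (hb : b ≤ 1) (hab : a < b) :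
    ∃ n, a < qq n ∧ qq n < b := by
  obtain ⟨ζ, hζ1, hζ2⟩ := exists_rat_btwn hab
  obtain ⟨k, hk⟩ := eQ_surj ζ
  refine ⟨k + 2, ?_⟩
  have h0 : 0 < ((ζ : ℚ) : ℝ) := lt_of_le_of_lt ha hζ1
  have h1 : ((ζ : ℚ) : ℝ) < 1 := lt_of_lt_of_le hζ2 hb
  have : qq (k+2) = ((ζ : ℚ) : ℝ) := by
    rw [qq_two, hk, if_pos ⟨h0, h1⟩]
  rw [this]; exact ⟨hζ1, hζ2⟩

noncomputable def mu (t mm : ℝ) (n : ℕ) : ℝ := mm + (t - mm) / 2 ^ n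

lemma mu_zero (t mm : ℝ) : mu t mm 0 = t := by simp [mu]

lemma mm_lt_mu {t mm : ℝ} (h : mm < t) (n : ℕ) : mm < mu t mm n := by
  have : (0:ℝ) < (t - mm) / 2 ^ n := div_pos (by linarith) (by positivity)
  simp only [mu]; linarith

lemma mu_strict_anti {t mm : ℝ} (h : mm < t) {k n : ℕ} (hkn : k < n) :
    mu t mm n < mu t mm k := by
  have h2 : (2:ℝ) ^ k < 2 ^ n := pow_lt_pow_right₀ one_lt_two hkn
  have hp : (0:ℝ) < 2 ^ k := by positivity
  have : (t - mm) / 2 ^ n < (t - mm) / 2 ^ k :=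
    div_lt_div_of_pos_left (by linarith) hp h2
  simp only [mu]; linarith

lemma mu_pos {t mm : ℝ} (hm : 0 < mm) (h : mm < t) (n : ℕ) : 0 < mu t mm n :=
  hm.trans (mm_lt_mu h n)

lemma mu_le_t {t mm : ℝ} (h : mm < t) (n : ℕ) : mu t mm n ≤ t := by
  rcases Nat.eq_zero_or_pos n with h0 | h0
  · subst h0; rw [mu_zero]
  · exact ((mu_strict_anti h h0).le.trans (mu_zero t mm).le)


section Construction

open scoped Classical

variable [CompactSpace X] [T2Space X]
variable (T : TopometricOn X) (x₀ y₀ : X) (t mm : ℝ)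

/-- inner thickening set used at insertion of index `n`, relative to prior sets `P`. -/
def MM (n : ℕ) (P : ℕ → Set X) : Set X :=
  ⋃ i ∈ {i : ℕ | i < n ∧ qq i < qq n},
    {z | T.ptD z (closure (P i)) ≤ ENNReal.ofReal ((qq n - qq i) * mu t mm n)}

/-- outer margin set used at insertion of index `n`. -/
def UU (n : ℕ) (P : ℕ → Set X) : Set X :=
  ⋂ j ∈ {j : ℕ | j < n ∧ qq n < qq j},
    {z | ENNReal.ofReal ((qq j - qq n) * mu t mm n) < T.ptD z ((P j)ᶜ)}

noncomputable def nextSet : ℕ → (ℕ → Set X) → Set X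
  | 0, _ => if h : ∃ W : Set X, IsOpen W ∧ x₀ ∈ W ∧
        closure W ⊆ {z | ENNReal.ofReal t < T.d z y₀} then h.choose else ∅
  | 1, _ => {y₀}ᶜ
  | (k+2), P =>
      if h : ∃ W : Set X, IsOpen W ∧ MM T t mm (k+2) P ⊆ W ∧
          closure W ⊆ UU T t mm (k+2) P then h.choose else ∅

noncomputable def stages : ℕ → ℕ → Set X
  | 0 => fun _ => ∅
  | (s+1) => Function.update (stages s) s (nextSet T x₀ y₀ t mm s (stages s))

noncomputable def VS (n : ℕ) : Set X := stages T x₀ y₀ t mm (n+1) n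

lemma VS_eq (n : ℕ) : VS T x₀ y₀ t mm n
    = nextSet T x₀ y₀ t mm n (stages T x₀ y₀ t mm n) := by
  show Function.update (stages T x₀ y₀ t mm n) n _ n = _
  rw [Function.update_self]

lemma stages_eq : ∀ s n, n < s → stages T x₀ y₀ t mm s n = VS T x₀ y₀ t mm n := by
  intro s
  induction s with
  | zero => intro n hn; exact absurd hn (Nat.not_lt_zero n)
  | succ s ih =>
      intro n hn
      rcases Nat.lt_succ_iff_lt_or_eq.1 hn with h | h
      · show Function.update (stages T x₀ y₀ t mm s) s _ n = _
        rw [Function.update_of_ne (Nat.ne_of_lt h)]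
        exact ih n h
      · subst h; rfl

lemma isOpen_VS (n : ℕ) : IsOpen (VS T x₀ y₀ t mm n) := by
  rw [VS_eq]
  match n with
  | 0 =>
      show IsOpen (dite _ _ _)
      split
      · next h => exact h.choose_spec.1
      · exact isOpen_empty
  | 1 => exact isClosed_singleton.isOpen_compl
  | (k+2) =>
      show IsOpen (dite _ _ _)
      split
      · next h => exact h.choose_spec.1
      · exact isOpen_empty

lemma VS_one : VS T x₀ y₀ t mm 1 = {y₀}ᶜ := VS_eq T x₀ y₀ t mm 1

lemma MM_stages (n : ℕ) : MM T t mm n (stages T x₀ y₀ t mm n) = MM T t mm n (VS T x₀ y₀ t mm) := by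
  unfold MM
  refine Set.iUnion_congr fun i => Set.iUnion_congr fun hi => ?_
  rw [stages_eq T x₀ y₀ t mm n i hi.1]

lemma UU_stages (n : ℕ) : UU T t mm n (stages T x₀ y₀ t mm n) = UU T t mm n (VS T x₀ y₀ t mm) := by
  unfold UU
  refine Set.iInter_congr fun j => Set.iInter_congr fun hj => ?_
  rw [stages_eq T x₀ y₀ t mm n j hj.1]


lemma VS_zero_spec (hm : 0 < mm) (hmt : mm < t) (hxy : ENNReal.ofReal t < T.d x₀ y₀) :
    IsOpen (VS T x₀ y₀ t mm 0) ∧ x₀ ∈ VS T x₀ y₀ t mm 0 ∧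
      closure (VS T x₀ y₀ t mm 0) ⊆ {z | ENNReal.ofReal t < T.d z y₀} := by
  have hO : IsOpen {z | ENNReal.ofReal t < T.d z y₀} := by
    have h1 := lsc_left T y₀
    rw [lowerSemicontinuous_iff_isOpen_preimage] at h1
    exact h1 _
  have hpred : ∃ W : Set X, IsOpen W ∧ x₀ ∈ W ∧
      closure W ⊆ {z | ENNReal.ofReal t < T.d z y₀} := by
    obtain ⟨u, hu, hsu, hclu⟩ := normal_exists_closure_subset isClosed_singleton hO
      (singleton_subset_iff.2 hxy)
    exact ⟨u, hu, hsu rfl, hclu⟩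
  rw [VS_eq]
  show IsOpen (dite _ _ _) ∧ x₀ ∈ (dite _ _ _) ∧ closure (dite _ _ _) ⊆ _
  rw [dif_pos hpred]
  exact hpred.choose_spec

lemma VS_step_spec (hm : 0 < mm) (hmt : mm < t) (n : ℕ) (hn : 2 ≤ n)
    (ih : ∀ i j, i < n → j < n → qq i < qq j →
      closure (VS T x₀ y₀ t mm i) ⊆ VS T x₀ y₀ t mm j ∧
      ∀ p ∈ closure (VS T x₀ y₀ t mm i), ∀ w, w ∉ VS T x₀ y₀ t mm j →
        ENNReal.ofReal ((qq j - qq i) * mu t mm (max i j)) < T.d p w) :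
    MM T t mm n (VS T x₀ y₀ t mm) ⊆ VS T x₀ y₀ t mm n ∧
      closure (VS T x₀ y₀ t mm n) ⊆ UU T t mm n (VS T x₀ y₀ t mm) := by
  have hMclosed : IsClosed (MM T t mm n (VS T x₀ y₀ t mm)) := by
    refine Set.Finite.isClosed_biUnion ((Set.finite_Iio n).subset fun i hi => hi.1) ?_
    exact fun i _ => isClosed_thick T isClosed_closure _
  have hUopen : IsOpen (UU T t mm n (VS T x₀ y₀ t mm)) := by
    refine Set.Finite.isOpen_biInter ((Set.finite_Iio n).subset fun j hj => hj.1) ?_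
    exact fun j _ => isOpen_ptD_gt T (isOpen_VS T x₀ y₀ t mm j).isClosed_compl _
  have hMU : MM T t mm n (VS T x₀ y₀ t mm) ⊆ UU T t mm n (VS T x₀ y₀ t mm) := by
    intro z hz
    rw [MM, mem_iUnion₂] at hz
    obtain ⟨i, ⟨hin, hqi⟩, hzi⟩ := hz
    rw [UU, mem_iInter₂]
    rintro j ⟨hjn, hqj⟩
    simp only [mem_setOf_eq] at hzi ⊢
    set A := (qq n - qq i) * mu t mm n with hA
    set C := (qq j - qq n) * mu t mm n with hC
    set B := (qq j - qq i) * mu t mm (max i j) with hB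
    have hij : qq i < qq j := hqi.trans hqj
    have hmun : 0 < mu t mm n := mu_pos hm hmt n
    have hmumax : mu t mm n < mu t mm (max i j) :=
      mu_strict_anti hmt (max_lt hin hjn)
    have hApos : 0 < A := mul_pos (by linarith) hmun
    have hCpos : 0 < C := mul_pos (by linarith) hmun
    have hACB : A + C < B := by
      have h1 : A + C = (qq j - qq i) * mu t mm n := by ring
      rw [h1, hB]
      exact mul_lt_mul_of_pos_left hmumax (by linarith)
    set η := (B - A - C)/2 with hη
    have hηpos : 0 < η := by simp only [hη]; linarith
    have h1 : T.ptD z (closure (VS T x₀ y₀ t mm i)) < ENNReal.ofReal (A + η) :=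
      hzi.trans_lt (ENNReal.ofReal_lt_ofReal_iff (by linarith)|>.2 (by linarith))
    obtain ⟨p, hpcl, hpz⟩ := exists_of_ptD_lt T h1
    refine lt_of_lt_of_le (ENNReal.ofReal_lt_ofReal_iff (by linarith)|>.2 (by linarith)
      : ENNReal.ofReal C < ENNReal.ofReal (C + η)) (le_ptD T fun w hw => ?_)
    by_contra hcon
    push_neg at hcon
    have hBlt := (ih i j hin hjn hij).2 p hpcl w hw
    have htri : T.d p w ≤ T.d z p + T.d z w := by
      rw [T.d_symm z p]; exact T.d_triangle p z w
    have hlt : T.d p w < ENNReal.ofReal (A + η) + ENNReal.ofReal (C + η) :=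
      htri.trans_lt (ENNReal.add_lt_add hpz hcon)
    rw [← ENNReal.ofReal_add (by linarith) (by linarith)] at hlt
    have heq : A + η + (C + η) = B := by simp only [hη]; ring
    rw [heq] at hlt
    exact absurd hBlt hlt.asymm
  obtain ⟨k, rfl⟩ : ∃ k, n = k + 2 := ⟨n - 2, by omega⟩
  obtain ⟨W, hWopen, hMW, hclW⟩ := normal_exists_closure_subset hMclosed hUopen hMU
  have hpred : ∃ W : Set X, IsOpen W ∧
      MM T t mm (k+2) (stages T x₀ y₀ t mm (k+2)) ⊆ W ∧
      closure W ⊆ UU T t mm (k+2) (stages T x₀ y₀ t mm (k+2)) := by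
    rw [MM_stages, UU_stages]
    exact ⟨W, hWopen, hMW, hclW⟩
  have hVS : VS T x₀ y₀ t mm (k+2) = hpred.choose := by
    rw [VS_eq]
    show dite _ _ _ = _
    rw [dif_pos hpred]
  have spec := hpred.choose_spec
  rw [hVS, ← MM_stages, ← UU_stages]
  exact ⟨spec.2.1, spec.2.2⟩


lemma inv_all (hm : 0 < mm) (hmt : mm < t) (hxy : ENNReal.ofReal t < T.d x₀ y₀) :
    ∀ n, ∀ i j, i ≤ n → j ≤ n → qq i < qq j →
      closure (VS T x₀ y₀ t mm i) ⊆ VS T x₀ y₀ t mm j ∧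
      ∀ p ∈ closure (VS T x₀ y₀ t mm i), ∀ w, w ∉ VS T x₀ y₀ t mm j →
        ENNReal.ofReal ((qq j - qq i) * mu t mm (max i j)) < T.d p w := by
  intro n
  induction n with
  | zero =>
      intro i j hi hj hq
      rw [Nat.le_zero] at hi hj; subst hi; subst hj
      exact absurd hq (lt_irrefl _)
  | succ n ih =>
      intro i j hi hj hq
      by_cases hin : i ≤ n ∧ j ≤ n
      · exact ih i j hin.1 hin.2 hq
      · have hiN : i = n + 1 ∨ j = n + 1 := by omega
        rcases Nat.lt_or_ge (n+1) 2 with hN1 | hN2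
        · -- n + 1 = 1, so pair is (0, 1)
          have hn0 : n = 0 := by omega
          subst hn0
          have hij : i = 0 ∧ j = 1 := by
            rcases hiN with h | h
            · subst h
              -- qq 1 < qq j with j ≤ 1 : impossible
              interval_cases j
              · exact absurd hq (by norm_num)
              · exact absurd hq (lt_irrefl _)
            · subst h
              interval_cases i
              · exact ⟨rfl, rfl⟩
              · exact absurd hq (lt_irrefl _)
          obtain ⟨h0, h1⟩ := hij; subst h0; subst h1
          obtain ⟨-, -, hcl0⟩ := VS_zero_spec T x₀ y₀ t mm hm hmt hxy
          have htpos : 0 < t := hm.trans hmt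
          constructor
          · intro p hp
            have := hcl0 hp
            rw [mem_setOf_eq] at this
            rw [VS_one, mem_compl_iff, mem_singleton_iff]
            intro hpy
            subst hpy
            rw [T.d_self] at this
            exact absurd this (by simp)
          · intro p hp w hw
            rw [VS_one, mem_compl_iff, not_not, mem_singleton_iff] at hw
            subst hw
            have h2 := hcl0 hp
            rw [mem_setOf_eq] at h2
            refine lt_of_le_of_lt ?_ h2
            apply ENNReal.ofReal_le_ofReal
            have := mu_strict_anti hmt (Nat.zero_lt_one)
            rw [mu_zero] at this
            simp only [qq_one, qq_zero, sub_zero, one_mul]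
            have : mu t mm (max 0 1) = mu t mm 1 := by norm_num
            rw [this]
            exact (mu_strict_anti hmt Nat.zero_lt_one).le.trans (by rw [mu_zero])
        · -- n + 1 ≥ 2
          have ⟨hMsub, hclsub⟩ := VS_step_spec T x₀ y₀ t mm hm hmt (n+1) hN2
            (fun a b ha hb hab => ih a b (by omega) (by omega) hab)
          rcases hiN with h | h
          · -- i = n+1 : use UU
            subst h
            have hjn : j < n + 1 := by
              rcases Nat.lt_or_ge j (n+1) with h' | h'
              · exact h'
              · exfalso; have : j = n + 1 := by omega
                subst this; exact absurd hq (lt_irrefl _)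
            have hUcomp : ∀ p ∈ closure (VS T x₀ y₀ t mm (n+1)),
                ENNReal.ofReal ((qq j - qq (n+1)) * mu t mm (n+1)) <
                  T.ptD p ((VS T x₀ y₀ t mm j)ᶜ) := by
              intro p hp
              have := hclsub hp
              rw [UU, mem_iInter₂] at this
              exact this j ⟨hjn, hq⟩
            constructor
            · intro p hp
              by_contra hpj
              have h2 := hUcomp p hp
              have h3 : T.ptD p ((VS T x₀ y₀ t mm j)ᶜ) ≤ 0 := by
                have := ptD_le T (K := (VS T x₀ y₀ t mm j)ᶜ) (z := p) hpj
                rwa [T.d_self] at this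
              have := h2.trans_le h3
              exact absurd this (by simp)
            · intro p hp w hw
              have h2 := hUcomp p hp
              have h3 : T.ptD p ((VS T x₀ y₀ t mm j)ᶜ) ≤ T.d p w := ptD_le T hw
              have hmax : max (n+1) j = n + 1 := by omega
              rw [hmax]
              exact h2.trans_le h3
          · -- j = n+1 : use MM
            subst h
            have hin' : i < n + 1 := by
              rcases Nat.lt_or_ge i (n+1) with h' | h'
              · exact h'
              · exfalso; have : i = n + 1 := by omega
                subst this; exact absurd hq (lt_irrefl _)
            have hclM : closure (VS T x₀ y₀ t mm i) ⊆ MM T t mm (n+1) (VS T x₀ y₀ t mm) := by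
              intro z hz
              rw [MM, mem_iUnion₂]
              refine ⟨i, ⟨hin', hq⟩, ?_⟩
              rw [mem_setOf_eq]
              have : T.ptD z (closure (VS T x₀ y₀ t mm i)) ≤ 0 := by
                have := ptD_le T (z := z) hz
                rwa [T.d_self] at this
              exact this.trans zero_le
            constructor
            · exact hclM.trans hMsub
            · intro p hp w hw
              have hwM : w ∉ MM T t mm (n+1) (VS T x₀ y₀ t mm) := fun hwm => hw (hMsub hwm)
              have : ¬ (T.ptD w (closure (VS T x₀ y₀ t mm i)) ≤
                  ENNReal.ofReal ((qq (n+1) - qq i) * mu t mm (n+1))) := by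
                intro hle
                exact hwM (by rw [MM, mem_iUnion₂]; exact ⟨i, ⟨hin', hq⟩, hle⟩)
              push_neg at this
              have h2 : T.ptD w (closure (VS T x₀ y₀ t mm i)) ≤ T.d w p := ptD_le T hp
              have hmax : max i (n+1) = n + 1 := by omega
              rw [hmax, T.d_symm p w]
              exact this.trans_le h2


noncomputable def gg (n : ℕ) (z : X) : ℝ := if z ∈ VS T x₀ y₀ t mm n then qq n else 1

noncomputable def ff (z : X) : ℝ := ⨅ n, gg T x₀ y₀ t mm n z

lemma gg_nonneg (n : ℕ) (z : X) : 0 ≤ gg T x₀ y₀ t mm n z := by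
  unfold gg; split_ifs; exacts [qq_nonneg n, zero_le_one]

lemma gg_le_one (n : ℕ) (z : X) : gg T x₀ y₀ t mm n z ≤ 1 := by
  unfold gg; split_ifs; exacts [qq_le_one n, le_refl _]

lemma gg_bdd (z : X) : BddBelow (Set.range fun n => gg T x₀ y₀ t mm n z) :=
  ⟨0, fun _ ⟨n, hn⟩ => hn ▸ gg_nonneg T x₀ y₀ t mm n z⟩

lemma ff_le_gg (n : ℕ) (z : X) : ff T x₀ y₀ t mm z ≤ gg T x₀ y₀ t mm n z :=
  ciInf_le (gg_bdd T x₀ y₀ t mm z) n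

lemma ff_nonneg (z : X) : 0 ≤ ff T x₀ y₀ t mm z :=
  le_ciInf fun n => gg_nonneg T x₀ y₀ t mm n z

lemma ff_le_one (z : X) : ff T x₀ y₀ t mm z ≤ 1 :=
  (ff_le_gg T x₀ y₀ t mm 0 z).trans (gg_le_one T x₀ y₀ t mm 0 z)

lemma ff_le_of_mem {n : ℕ} {z : X} (hz : z ∈ VS T x₀ y₀ t mm n) :
    ff T x₀ y₀ t mm z ≤ qq n := by
  have := ff_le_gg T x₀ y₀ t mm n z
  rwa [gg, if_pos hz] at this

lemma ff_x0 (hm : 0 < mm) (hmt : mm < t) (hxy : ENNReal.ofReal t < T.d x₀ y₀) :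
    ff T x₀ y₀ t mm x₀ = 0 := by
  refine le_antisymm ?_ (ff_nonneg T x₀ y₀ t mm x₀)
  have h0 := (VS_zero_spec T x₀ y₀ t mm hm hmt hxy).2.1
  simpa using ff_le_of_mem T x₀ y₀ t mm h0

lemma y0_not_mem (hm : 0 < mm) (hmt : mm < t) (hxy : ENNReal.ofReal t < T.d x₀ y₀) (n : ℕ) :
    y₀ ∉ VS T x₀ y₀ t mm n := by
  by_cases hn : n = 1
  · subst hn; rw [VS_one]; simp
  · intro hy
    have hq : qq n < qq 1 := by rw [qq_one]; exact qq_lt_one hn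
    have hpair := (inv_all T x₀ y₀ t mm hm hmt hxy (max n 1) n 1
      (le_max_left _ _) (le_max_right _ _) hq).1
    have : y₀ ∈ VS T x₀ y₀ t mm 1 := hpair (subset_closure hy)
    rw [VS_one] at this
    simp at this

lemma ff_y0 (hm : 0 < mm) (hmt : mm < t) (hxy : ENNReal.ofReal t < T.d x₀ y₀) :
    ff T x₀ y₀ t mm y₀ = 1 := by
  have : ∀ n, gg T x₀ y₀ t mm n y₀ = 1 := fun n => by
    rw [gg, if_neg (y0_not_mem T x₀ y₀ t mm hm hmt hxy n)]
  unfold ff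
  simp only [this, ciInf_const]

lemma ff_lip (hm : 0 < mm) (hmt : mm < t) (hxy : ENNReal.ofReal t < T.d x₀ y₀)
    (z w : X) (hne : T.d z w ≠ ⊤) :
    ff T x₀ y₀ t mm z ≤ ff T x₀ y₀ t mm w + (T.d z w).toReal / mm := by
  set e := (T.d z w).toReal / mm with he
  have hepos : 0 ≤ e := div_nonneg ENNReal.toReal_nonneg hm.le
  refine le_of_forall_pos_le_add fun δ hδ => ?_
  set δ3 := δ / 3 with hδ3
  have hδ3pos : 0 < δ3 := by positivity
  by_cases hcase : 1 ≤ ff T x₀ y₀ t mm w + e + δ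
  · calc ff T x₀ y₀ t mm z ≤ 1 := ff_le_one T x₀ y₀ t mm z
      _ ≤ ff T x₀ y₀ t mm w + e + δ := hcase
  push_neg at hcase
  obtain ⟨n, hn⟩ : ∃ n, gg T x₀ y₀ t mm n w < ff T x₀ y₀ t mm w + δ3 :=
    exists_lt_of_ciInf_lt (by linarith [ff_nonneg T x₀ y₀ t mm w] :
      ff T x₀ y₀ t mm w < ff T x₀ y₀ t mm w + δ3)
  by_cases hwn : w ∈ VS T x₀ y₀ t mm n
  swap
  · rw [gg, if_neg hwn] at hn
    linarith
  rw [gg, if_pos hwn] at hn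
  have hb1 : qq n + e + 2*δ3 ≤ 1 := by linarith
  obtain ⟨k, hk1, hk2⟩ := qq_dense (a := qq n + e + δ3) (b := qq n + e + 2*δ3)
    (by linarith [qq_nonneg n]) hb1 (by linarith)
  have hqnk : qq n < qq k := by linarith
  have hzk : z ∈ VS T x₀ y₀ t mm k := by
    by_contra hzk
    have hpair := (inv_all T x₀ y₀ t mm hm hmt hxy (max n k) n k
      (le_max_left _ _) (le_max_right _ _) hqnk).2 w (subset_closure hwn) z hzk
    have hmm : mm < mu t mm (max n k) := mm_lt_mu hmt _
    have hbound : (T.d z w).toReal < (qq k - qq n) * mu t mm (max n k) := by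
      have h1 : (T.d z w).toReal = e * mm := by
        rw [he, div_mul_cancel₀ _ hm.ne']
      have h2 : e * mm < (qq k - qq n) * mm := by
        have : e < qq k - qq n := by linarith
        exact mul_lt_mul_of_pos_right this hm
      have h3 : (qq k - qq n) * mm < (qq k - qq n) * mu t mm (max n k) :=
        mul_lt_mul_of_pos_left hmm (by linarith)
      linarith
    have hle : T.d w z ≤ ENNReal.ofReal ((qq k - qq n) * mu t mm (max n k)) := by
      rw [T.d_symm w z, ← ENNReal.ofReal_toReal hne]
      exact ENNReal.ofReal_le_ofReal hbound.le
    exact absurd hpair hle.not_gt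
  calc ff T x₀ y₀ t mm z ≤ qq k := ff_le_of_mem T x₀ y₀ t mm hzk
    _ ≤ qq n + e + 2*δ3 := hk2.le
    _ ≤ ff T x₀ y₀ t mm w + e + δ := by linarith

lemma ff_cont (hm : 0 < mm) (hmt : mm < t) (hxy : ENNReal.ofReal t < T.d x₀ y₀) :
    Continuous (ff T x₀ y₀ t mm) := by
  rw [continuous_iff_continuousAt]
  intro z
  rw [ContinuousAt, tendsto_order]
  constructor
  · intro b hb
    by_cases hb0 : b < 0
    · exact Filter.Eventually.of_forall fun w =>
        hb0.trans_le (ff_nonneg T x₀ y₀ t mm w)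
    push_neg at hb0
    obtain ⟨nc, hc1, hc2⟩ := qq_dense hb0 (ff_le_one T x₀ y₀ t mm z) hb
    obtain ⟨nc', hc1', hc2'⟩ := qq_dense (qq_nonneg nc)
      (ff_le_one T x₀ y₀ t mm z) hc2
    have hzN : z ∈ (closure (VS T x₀ y₀ t mm nc))ᶜ := by
      intro hzc
      have hpair := (inv_all T x₀ y₀ t mm hm hmt hxy (max nc nc') nc nc'
        (le_max_left _ _) (le_max_right _ _) hc1').1
      have := ff_le_of_mem T x₀ y₀ t mm (hpair hzc)
      linarith
    filter_upwards [isClosed_closure.isOpen_compl.mem_nhds hzN] with w hw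
    have : qq nc ≤ ff T x₀ y₀ t mm w := by
      refine le_ciInf fun k => ?_
      rw [gg]
      split_ifs with hwk
      · by_contra hlt
        push_neg at hlt
        have hpair := (inv_all T x₀ y₀ t mm hm hmt hxy (max k nc) k nc
          (le_max_left _ _) (le_max_right _ _) hlt).1
        exact hw (subset_closure (hpair (subset_closure hwk)))
      · exact qq_le_one nc
    linarith
  · intro b hb
    obtain ⟨n, hn⟩ : ∃ n, gg T x₀ y₀ t mm n z < b := exists_lt_of_ciInf_lt hb
    by_cases hzn : z ∈ VS T x₀ y₀ t mm n
    · rw [gg, if_pos hzn] at hn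
      filter_upwards [(isOpen_VS T x₀ y₀ t mm n).mem_nhds hzn] with w hw
      exact (ff_le_of_mem T x₀ y₀ t mm hw).trans_lt hn
    · rw [gg, if_neg hzn] at hn
      exact Filter.Eventually.of_forall fun w =>
        (ff_le_one T x₀ y₀ t mm w).trans_lt hn

lemma exists_lip (hm : 0 < mm) (hmt : mm < t) (hxy : ENNReal.ofReal t < T.d x₀ y₀) :
    ∃ f : X → ℝ, Continuous f ∧ f x₀ = 0 ∧ f y₀ = 1 ∧
      ∀ z w, ENNReal.ofReal (mm * |f z - f w|) ≤ T.d z w := by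
  refine ⟨ff T x₀ y₀ t mm, ff_cont T x₀ y₀ t mm hm hmt hxy,
    ff_x0 T x₀ y₀ t mm hm hmt hxy, ff_y0 T x₀ y₀ t mm hm hmt hxy, fun z w => ?_⟩
  by_cases hne : T.d z w = ⊤
  · rw [hne]; exact le_top
  have h1 := ff_lip T x₀ y₀ t mm hm hmt hxy z w hne
  have hne' : T.d w z ≠ ⊤ := by rw [T.d_symm w z]; exact hne
  have h2 := ff_lip T x₀ y₀ t mm hm hmt hxy w z hne'
  rw [T.d_symm w z] at h2
  have habs : |ff T x₀ y₀ t mm z - ff T x₀ y₀ t mm w| ≤ (T.d z w).toReal / mm :=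
    abs_sub_le_iff.2 ⟨by linarith, by linarith⟩
  have : mm * |ff T x₀ y₀ t mm z - ff T x₀ y₀ t mm w| ≤ (T.d z w).toReal := by
    rw [← le_div_iff₀' hm]
    exact habs
  calc ENNReal.ofReal (mm * |ff T x₀ y₀ t mm z - ff T x₀ y₀ t mm w|)
      ≤ ENNReal.ofReal ((T.d z w).toReal) := ENNReal.ofReal_le_ofReal this
    _ = T.d z w := ENNReal.ofReal_toReal hne

end Construction


lemma urysohn_lip {X : Type*} [TopologicalSpace X] [CompactSpace X] [T2Space X]
    (T : TopometricOn X) (x₀ y₀ : X) (τ : ℝ≥0∞) (hτ : τ < T.d x₀ y₀) :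
    ∃ F : X → ℂ, Continuous F ∧ (∀ z w, edist (F z) (F w) ≤ T.d z w) ∧
      τ ≤ edist (F x₀) (F y₀) := by
  by_cases hτ0 : τ = 0
  · exact ⟨fun _ => 0, continuous_const, fun z w => by simp, by simp [hτ0]⟩
  have hτtop : τ ≠ ⊤ := hτ.ne_top
  obtain ⟨σ, hσ1, hσ2⟩ := exists_between hτ
  have hσtop : σ ≠ ⊤ := hσ2.ne_top
  set t := σ.toReal with ht
  set mm := (τ.toReal + t)/2 with hmm
  have hτt : τ.toReal < t := (ENNReal.toReal_lt_toReal hτtop hσtop).2 hσ1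
  have hτpos : 0 < τ.toReal := ENNReal.toReal_pos hτ0 hτtop
  have hm : 0 < mm := by rw [hmm]; linarith
  have hmt : mm < t := by rw [hmm]; linarith
  have hxy : ENNReal.ofReal t < T.d x₀ y₀ := by
    rw [ht, ENNReal.ofReal_toReal hσtop]; exact hσ2
  obtain ⟨f, hfc, hf0, hf1, hflip⟩ := exists_lip T x₀ y₀ t mm hm hmt hxy
  refine ⟨fun z => ((mm * f z : ℝ) : ℂ), Complex.continuous_ofReal.comp
    (continuous_const.mul hfc), fun z w => ?_, ?_⟩
  · rw [Complex.isometry_ofReal.edist_eq, edist_dist, Real.dist_eq]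
    have : mm * f z - mm * f w = mm * (f z - f w) := by ring
    rw [this, abs_mul, abs_of_pos hm]
    exact hflip z w
  · rw [Complex.isometry_ofReal.edist_eq, edist_dist, Real.dist_eq, hf0, hf1]
    have h1 : |mm * 0 - mm * 1| = mm := by
      rw [mul_zero, mul_one, zero_sub, abs_neg, abs_of_pos hm]
    rw [h1]
    calc τ = ENNReal.ofReal τ.toReal := (ENNReal.ofReal_toReal hτtop).symm
      _ ≤ ENNReal.ofReal mm := ENNReal.ofReal_le_ofReal (by rw [hmm]; linarith)

end L1Urysohn

set_option maxHeartbeats 2000000 in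
/-- an `L(1)`-set `A ⊆ C(X, ℂ)` on a compact space `X` is exactly the set
of continuous `1`-Lipschitz functions for a (unique) topometric structure on `X`, whose
metric is `d(x,y) = sup_{f ∈ A} |f(x) − f(y)|`. -/
theorem l1Set_eq_continuous_one_lipschitz {X : Type*} [TopologicalSpace X] [CompactSpace X]
    (A : Set (X → ℂ)) (hAc : ∀ f ∈ A, Continuous f)
    (h_convex : Convex ℝ A)
    (h_smul : ∀ f ∈ A, ∀ α : ℂ, ‖α‖ ≤ 1 → (fun x => α * f x) ∈ A)
    (h_abs : ∀ f ∈ A, (fun x => (‖f x‖ : ℂ)) ∈ A)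
    (h_sep : ∀ x y : X, x ≠ y → ∃ f ∈ A, f x ≠ f y)
    (h_const : ∀ α : ℂ, (fun _ : X => α) ∈ A)
    (h_closed : ∀ f : X → ℂ, Continuous f → f ∉ A →
      ∃ x y : X, ∃ ε > (0 : ℝ), ∀ g : X → ℂ, Continuous g →
        ‖f x - g x‖ < ε → ‖f y - g y‖ < ε → g ∉ A) :
    ∃ T : TopometricOn X,
      (∀ x y : X, T.d x y = ⨆ f : A, edist ((f : X → ℂ) x) ((f : X → ℂ) y)) ∧
      A = {f : X → ℂ | Continuous f ∧ ∀ x y, edist (f x) (f y) ≤ T.d x y} ∧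
      ∀ T' : TopometricOn X,
        A = {f : X → ℂ | Continuous f ∧ ∀ x y, edist (f x) (f y) ≤ T'.d x y} →
        T'.d = T.d := by
  classical
  haveI : Nonempty ↥A := ⟨⟨fun _ => 0, h_const 0⟩⟩
  haveI hT2 : T2Space X := by
    refine ⟨fun x y hxy => ?_⟩
    obtain ⟨f, hfA, hfxy⟩ := h_sep x y hxy
    obtain ⟨u, v, hu, hv, hfu, hfv, huv⟩ := t2_separation hfxy
    exact ⟨f ⁻¹' u, f ⁻¹' v, hu.preimage (hAc f hfA), hv.preimage (hAc f hfA),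
      hfu, hfv, huv.preimage f⟩
  set D : X → X → ℝ≥0∞ := fun x y => ⨆ f : A, edist ((f : X → ℂ) x) ((f : X → ℂ) y) with hD
  have hD_le : ∀ f ∈ A, ∀ x y : X, edist (f x) (f y) ≤ D x y := by
    intro f hf x y
    exact le_iSup (fun g : A => edist ((g : X → ℂ) x) ((g : X → ℂ) y)) ⟨f, hf⟩
  have hDzero : ∀ x y : X, D x y = 0 → x = y := by
    intro x y h0
    by_contra hxy
    obtain ⟨f, hfA, hfxy⟩ := h_sep x y hxy
    have : edist (f x) (f y) = 0 := le_antisymm ((hD_le f hfA x y).trans h0.le) zero_le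
    exact hfxy (edist_eq_zero.1 this)
  have hlsc : LowerSemicontinuous fun p : X × X => D p.1 p.2 := by
    apply lowerSemicontinuous_iSup
    intro f
    exact (((hAc f f.2).comp continuous_fst).edist
      ((hAc f f.2).comp continuous_snd)).lowerSemicontinuous
  have hself : ∀ x : X, D x x = 0 := by intro x; simp [hD]
  have hsymm : ∀ x y : X, D x y = D y x := by
    intro x y; simp only [hD]; exact iSup_congr fun f => edist_comm _ _
  have htri : ∀ x y z : X, D x z ≤ D x y + D y z := by
    intro x y z
    refine iSup_le fun f => ?_
    exact (edist_triangle _ ((f : X → ℂ) y) _).trans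
      (add_le_add (hD_le f f.2 x y) (hD_le f f.2 y z))
  have href : ∀ U : Set X, IsOpen U → ∀ x ∈ U, ∃ ε > (0 : ℝ≥0∞), ∀ y, D x y < ε → y ∈ U := by
    intro U hU x hx
    have hO : ∀ n : ℕ, IsOpen {y | ((n : ℝ≥0∞) + 1)⁻¹ < D x y} := by
      intro n
      have h1 : IsOpen {p : X × X | ((n : ℝ≥0∞) + 1)⁻¹ < D p.1 p.2} := by
        have h2 := hlsc
        rw [lowerSemicontinuous_iff_isOpen_preimage] at h2
        exact h2 _
      have h3 : {y | ((n : ℝ≥0∞) + 1)⁻¹ < D x y}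
          = (fun y => (x, y)) ⁻¹' {p : X × X | ((n : ℝ≥0∞) + 1)⁻¹ < D p.1 p.2} := rfl
      rw [h3]; exact h1.preimage (continuous_const.prodMk continuous_id)
    have hcov : Uᶜ ⊆ ⋃ n : ℕ, {y | ((n : ℝ≥0∞) + 1)⁻¹ < D x y} := by
      intro y hy
      have hne : D x y ≠ 0 := fun h0 => hy (hDzero x y h0 ▸ hx)
      obtain ⟨n, hn⟩ := ENNReal.exists_inv_nat_lt hne
      refine mem_iUnion.2 ⟨n, ?_⟩
      have : ((n : ℝ≥0∞) + 1)⁻¹ ≤ ((n : ℝ≥0∞))⁻¹ :=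
        ENNReal.inv_le_inv.2 (le_add_right le_rfl)
      exact this.trans_lt hn
    obtain ⟨s, hs⟩ := (hU.isClosed_compl.isCompact).elim_finite_subcover _ hO hcov
    set N := s.sup id with hN
    refine ⟨((N : ℝ≥0∞) + 1)⁻¹, ENNReal.inv_pos.2 (by simp), fun y hy => ?_⟩
    by_contra hyU
    obtain ⟨n, hns, hny⟩ := mem_iUnion₂.1 (hs hyU)
    rw [mem_setOf_eq] at hny
    have hnN : ((N : ℝ≥0∞) + 1)⁻¹ ≤ ((n : ℝ≥0∞) + 1)⁻¹ := by
      apply ENNReal.inv_le_inv.2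
      have : n ≤ N := Finset.le_sup (f := id) hns
      exact add_le_add (by exact_mod_cast this) le_rfl
    exact absurd (hny.trans (hy.trans_le hnN)) (lt_irrefl _)
  refine ⟨⟨D, hself, hDzero, hsymm, htri, hlsc, href⟩, fun x y => rfl, ?_, ?_⟩
  · -- A = Lipschitz set
    ext f
    simp only [mem_setOf_eq]
    constructor
    · intro hf
      exact ⟨hAc f hf, fun x y => hD_le f hf x y⟩
    · rintro ⟨hfc, hflip⟩
      by_contra hfA
      obtain ⟨x, y, ε, hε, hcl⟩ := h_closed f hfc hfA
      set a := f x with ha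
      set b := f y with hb
      by_cases hab : a = b
      · exact hcl (fun _ => a) continuous_const (by simpa using hε) (by simpa [hab] using hε) (h_const a)
      · set D0 := ‖a - b‖ with hD0
        have hD0pos : 0 < D0 := by
          rw [hD0]
          exact norm_pos_iff.2 (sub_ne_zero.2 hab)
        set η := min (1/2 : ℝ) (ε/(4*D0)) with hη
        have hηpos : 0 < η := lt_min (by norm_num) (by positivity)
        have hη2 : η ≤ 1/2 := min_le_left _ _
        have hηε : η ≤ ε/(4*D0) := min_le_right _ _
        have h1 : ENNReal.ofReal (D0 * (1 - η)) < D x y := by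
          refine lt_of_lt_of_le ?_ (hflip x y)
          rw [edist_dist, Complex.dist_eq, ← ha, ← hb, ← hD0]
          apply (ENNReal.ofReal_lt_ofReal_iff hD0pos).2
          nlinarith
        rw [hD, lt_iSup_iff] at h1
        obtain ⟨⟨g, hgA⟩, hg⟩ := h1
        rw [edist_dist, Complex.dist_eq] at hg
        have hg' : D0 * (1 - η) < ‖g x - g y‖ := by
          have h2 : (0:ℝ) ≤ D0 * (1 - η) := by nlinarith
          exact (ENNReal.ofReal_lt_ofReal_iff_of_nonneg h2).1 hg
        set G := g x - g y with hG
        have hGpos : 0 < ‖G‖ := by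
          refine lt_of_le_of_lt ?_ hg'
          nlinarith
        have hGne : G ≠ 0 := by
          intro h0; rw [h0] at hGpos; simp at hGpos
        set α := ((a - b) * ((1 - η : ℝ) : ℂ)) / G with hα
        have habsα : ‖α‖ ≤ 1 := by
          rw [hα, norm_div, norm_mul, Complex.norm_of_nonneg (by linarith)]
          rw [div_le_one hGpos]
          exact hg'.le
        have hg1 : (fun z => α * g z) ∈ A := h_smul g hgA α habsα
        set β := (a - ((1 - η : ℝ) : ℂ) * (α * g x)) / ((η : ℝ) : ℂ) with hβ
        have hmem : ((1 - η) • (fun z => α * g z) + η • (fun _ : X => β)) ∈ A :=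
          h_convex hg1 (h_const β) (by linarith) hηpos.le (by ring)
        have hηC : ((η : ℝ) : ℂ) ≠ 0 := Complex.ofReal_ne_zero.2 hηpos.ne'
        have hvalx : ((1 - η) • (fun z => α * g z) + η • (fun _ : X => β)) x = a := by
          simp only [Pi.add_apply, Pi.smul_apply, Complex.real_smul, hβ]
          field_simp
          ring
        have hvaly : ((1 - η) • (fun z => α * g z) + η • (fun _ : X => β)) y
            = a - (((1 - η : ℝ) : ℂ))^2 * (a - b) := by
          simp only [Pi.add_apply, Pi.smul_apply, Complex.real_smul, hβ, hα]
          field_simp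
          ring
        refine hcl _ (hAc _ hmem) ?_ ?_ hmem
        · rw [hvalx]
          simpa using hε
        · rw [hvaly]
          have hcalc : b - (a - (((1 - η : ℝ) : ℂ))^2 * (a - b))
              = ((((1 - η)^2 - 1 : ℝ)) : ℂ) * (a - b) := by
            push_cast
            ring
          rw [hcalc, norm_mul, Complex.norm_real, Real.norm_eq_abs, ← hD0]
          have habs1 : |(1 - η)^2 - 1| = 1 - (1-η)^2 := by
            rw [abs_of_nonpos (by nlinarith)]
            ring
          rw [habs1]
          have : (1 - (1-η)^2) * D0 ≤ 2 * η * D0 := by nlinarith [mul_nonneg (sq_nonneg η) hD0pos.le]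
          have h2 : 2 * η * D0 ≤ ε / 2 := by
            have := mul_le_mul_of_nonneg_right hηε (le_of_lt hD0pos)
            calc 2 * η * D0 ≤ 2 * (ε/(4*D0)) * D0 := by nlinarith
              _ = ε / 2 := by field_simp; ring
          linarith
  · -- uniqueness
    intro T' hA'
    funext x y
    refine le_antisymm ?_ ?_
    · -- T'.d ≤ D
      by_contra hcon
      push_neg at hcon
      obtain ⟨τ, hτ1, hτ2⟩ := exists_between hcon
      obtain ⟨F, hFc, hFlip, hFxy⟩ := L1Urysohn.urysohn_lip T' x y τ hτ2
      have hFA : F ∈ A := by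
        rw [hA']
        exact ⟨hFc, hFlip⟩
      have : edist (F x) (F y) ≤ D x y := hD_le F hFA x y
      exact absurd (hFxy.trans this) hτ1.not_ge
    · -- D ≤ T'.d
      refine iSup_le fun f => ?_
      have hiff := Set.ext_iff.1 hA' (f : X → ℂ)
      exact (hiff.1 f.2).2 x y
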